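/- Let c > 0, let η : ℝ → ℝ be twice continuously differentiable, and fix θ ∈ ℝ. For ε ∈ ℝ define ρ(ε) = c(1 + ε·η(θ)), p(ε) = ε·c·η'(θ), q(ε) = ε·c·η''(θ), and K(ε) = (sinh(ρ(ε))²·cosh(ρ(ε)) + 2·p(ε)²·cosh(ρ(ε)) − q(ε)·sinh(ρ(ε))) / (sinh(ρ(ε))² + p(ε)²)^{3/2}. Then K is differentiable at ε = 0 with K'(0) = −(c / sinh(c)²)·(η''(θ) + η(θ)). -/

import Mathlib

open Real

/-- Derivative computation (3.21): linearization of the geodesic curvature of a radial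
graph in H² at the geodesic circle ρ ≡ c gives K'(0) = −(c/sinh²c)(η''(θ)+η(θ)). -/
theorem curvature_linearization (c : ℝ) (hc : 0 < c) (η : ℝ → ℝ)
    (hη : ContDiff ℝ 2 η) (θ : ℝ) :
    HasDerivAt (fun ε : ℝ =>
        (Real.sinh (c * (1 + ε * η θ)) ^ 2 * Real.cosh (c * (1 + ε * η θ))
          + 2 * (ε * c * deriv η θ) ^ 2 * Real.cosh (c * (1 + ε * η θ))
          - (ε * c * deriv (deriv η) θ) * Real.sinh (c * (1 + ε * η θ)))
        / (Real.sinh (c * (1 + ε * η θ)) ^ 2 + (ε * c * deriv η θ) ^ 2) ^ ((3 : ℝ) / 2))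
      (-(c / Real.sinh c ^ 2) * (deriv (deriv η) θ + η θ)) 0 := by
  set a := η θ with ha
  set b := deriv η θ with hb
  set d := deriv (deriv η) θ with hd
  have hs0 : 0 < Real.sinh c := Real.sinh_pos_iff.mpr hc
  have h0 : c * (1 + (0:ℝ) * a) = c := by ring
  -- derivative of ρ(ε) = c(1+εa)
  have hρ : HasDerivAt (fun ε : ℝ => c * (1 + ε * a)) (c * a) 0 := by
    have := (((hasDerivAt_id (0:ℝ)).mul_const a).const_add 1).const_mul c
    simpa using this
  have hsinh : HasDerivAt (fun ε : ℝ => Real.sinh (c * (1 + ε * a)))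
      (Real.cosh c * (c * a)) 0 := by
    have := hρ.sinh
    rwa [h0] at this
  have hcosh : HasDerivAt (fun ε : ℝ => Real.cosh (c * (1 + ε * a)))
      (Real.sinh c * (c * a)) 0 := by
    have := hρ.cosh
    rwa [h0] at this
  have hsq : HasDerivAt (fun ε : ℝ => Real.sinh (c * (1 + ε * a)) ^ 2)
      (2 * Real.sinh c * (Real.cosh c * (c * a))) 0 := by
    have := hsinh.fun_pow 2
    simp only [h0] at this
    refine this.congr_deriv (Eq.symm ?_)
    ring
  -- p(ε) = ε c b
  have hp : HasDerivAt (fun ε : ℝ => ε * c * b) (c * b) 0 := by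
    have := ((hasDerivAt_id (0:ℝ)).mul_const c).mul_const b
    simpa using this
  have hpsq : HasDerivAt (fun ε : ℝ => (ε * c * b) ^ 2) 0 0 := by
    have := hp.fun_pow 2
    simpa using this
  -- q(ε) = ε c d
  have hq : HasDerivAt (fun ε : ℝ => ε * c * d) (c * d) 0 := by
    have := ((hasDerivAt_id (0:ℝ)).mul_const c).mul_const d
    simpa using this
  -- numerator
  have hN : HasDerivAt (fun ε : ℝ =>
      Real.sinh (c * (1 + ε * a)) ^ 2 * Real.cosh (c * (1 + ε * a))
        + 2 * (ε * c * b) ^ 2 * Real.cosh (c * (1 + ε * a))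
        - (ε * c * d) * Real.sinh (c * (1 + ε * a)))
      ((2 * Real.sinh c * (Real.cosh c * (c * a))) * Real.cosh c
        + Real.sinh c ^ 2 * (Real.sinh c * (c * a))
        + ((2 * 0) * Real.cosh c + (2 * 0 ^ 2) * (Real.sinh c * (c * a)))
        - ((c * d) * Real.sinh c + 0 * (Real.cosh c * (c * a)))) 0 := by
    have h1 := hsq.fun_mul hcosh
    have h2 := ((hpsq.const_mul 2).fun_mul hcosh)
    have h3 := hq.fun_mul hsinh
    have := (h1.fun_add h2).fun_sub h3
    simp only [h0] at this
    refine this.congr_deriv (Eq.symm ?_)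
    ring
  -- denominator base
  have hB : HasDerivAt (fun ε : ℝ =>
      Real.sinh (c * (1 + ε * a)) ^ 2 + (ε * c * b) ^ 2)
      (2 * Real.sinh c * (Real.cosh c * (c * a)) + 0) 0 := hsq.fun_add hpsq
  have hB0 : Real.sinh c ^ 2 + ((0:ℝ) * c * b) ^ 2 = Real.sinh c ^ 2 := by ring
  have hD : HasDerivAt (fun ε : ℝ =>
      (Real.sinh (c * (1 + ε * a)) ^ 2 + (ε * c * b) ^ 2) ^ ((3:ℝ)/2))
      ((2 * Real.sinh c * (Real.cosh c * (c * a)) + 0) * ((3:ℝ)/2)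
        * (Real.sinh c ^ 2) ^ ((3:ℝ)/2 - 1)) 0 := by
    have := hB.rpow_const (p := (3:ℝ)/2) (by norm_num)
    simp only [h0, hB0] at this
    exact this
  have hDne : ((Real.sinh c ^ 2 + ((0:ℝ) * c * b) ^ 2) ^ ((3:ℝ)/2)) ≠ 0 := by
    rw [hB0]
    positivity
  have hK := hN.fun_div hD (by simpa [h0] using hDne)
  have key : (Real.sinh c ^ 2) ^ ((3:ℝ)/2) = Real.sinh c ^ 3 := by
    rw [← Real.rpow_natCast (Real.sinh c) 2, ← Real.rpow_mul hs0.le,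
      ← Real.rpow_natCast (Real.sinh c) 3]
    norm_num
  have key2 : (Real.sinh c ^ 2) ^ ((3:ℝ)/2 - 1) = Real.sinh c := by
    rw [← Real.rpow_natCast (Real.sinh c) 2, ← Real.rpow_mul hs0.le]
    norm_num
  have hcosh2 : Real.cosh c ^ 2 = Real.sinh c ^ 2 + 1 := Real.cosh_sq c
  simp only [h0, hB0, key, key2] at hK
  refine hK.congr_deriv (Eq.symm ?_)
  have hsne : Real.sinh c ≠ 0 := ne_of_gt hs0
  field_simp
  linear_combination (c * a * Real.sinh c ^ 3 * 2) * hcosh2
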